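/- The space Sym2 (OnePoint ℂ) of unordered pairs of points of the Riemann sphere, equipped with the quotient topology induced from (OnePoint ℂ) × (OnePoint ℂ), is homeomorphic to the complex projective plane ℂP². -/

import Mathlib

/-- The quotient topology on the complex projective plane `ℙ ℂ (Fin 3 → ℂ)`, induced from
the subspace `{v // v ≠ 0}` of `ℂ³`. -/
noncomputable instance : TopologicalSpace (Projectivization ℂ (Fin 3 → ℂ)) :=
  (inferInstance : TopologicalSpace (Quotient (projectivizationSetoid ℂ (Fin 3 → ℂ))))

open scoped LinearAlgebra.Projectivization OnePoint
open Filter Topology Set OnePoint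

namespace Stmt7Aux

/-- The quotient map from nonzero vectors to the projective plane. -/
noncomputable def q (v : {v : Fin 3 → ℂ // v ≠ 0}) : Projectivization ℂ (Fin 3 → ℂ) :=
  Quotient.mk'' v

lemma q_eq (v : {v : Fin 3 → ℂ // v ≠ 0}) : q v = Projectivization.mk ℂ v.1 v.2 := rfl

lemma continuous_q : Continuous q := continuous_quotient_mk'

lemma q_surjective : Function.Surjective q := fun p => Quotient.inductionOn' p fun v => ⟨v, rfl⟩

lemma isQuotientMap_q : IsQuotientMap q := isQuotientMap_quotient_mk'

lemma q_eq_iff (v w : {v : Fin 3 → ℂ // v ≠ 0}) :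
    q v = q w ↔ ∃ c : ℂˣ, c • w.1 = v.1 := by
  rw [q_eq, q_eq, Projectivization.mk_eq_mk_iff]

lemma smul_ne (c : ℂˣ) (w : {v : Fin 3 → ℂ // v ≠ 0}) : (c : ℂ) • w.1 ≠ 0 :=
  smul_ne_zero c.ne_zero w.2

lemma isOpenMap_q : IsOpenMap q := by
  intro U hU
  rw [← isQuotientMap_q.isOpen_preimage]
  have key : q ⁻¹' (q '' U) =
      ⋃ c : ℂˣ, (fun w : {v : Fin 3 → ℂ // v ≠ 0} => (⟨(c : ℂ) • w.1, smul_ne c w⟩ :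
        {v : Fin 3 → ℂ // v ≠ 0})) ⁻¹' U := by
    ext w
    simp only [mem_preimage, mem_image, mem_iUnion]
    constructor
    · rintro ⟨v, hvU, hv⟩
      obtain ⟨c, hc⟩ := (q_eq_iff v w).mp hv
      refine ⟨c, ?_⟩
      have : (⟨(c : ℂ) • w.1, smul_ne c w⟩ : {v : Fin 3 → ℂ // v ≠ 0}) = v :=
        Subtype.ext (by simpa [Units.smul_def] using hc)
      rw [this]; exact hvU
    · rintro ⟨c, hc⟩
      exact ⟨_, hc, (q_eq_iff _ w).mpr ⟨c, by rw [Units.smul_def]⟩⟩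
  rw [key]
  exact isOpen_iUnion fun c =>
    hU.preimage (Continuous.subtype_mk (by fun_prop :
      Continuous fun w : {v : Fin 3 → ℂ // v ≠ 0} => (c : ℂ) • w.1) _)

instance : T2Space (Projectivization ℂ (Fin 3 → ℂ)) := by
  rw [t2_iff_isClosed_diagonal]
  have hqq : IsQuotientMap (Prod.map q q) :=
    (isOpenMap_q.prodMap isOpenMap_q).isQuotientMap (continuous_q.prodMap continuous_q)
      (q_surjective.prodMap q_surjective)
  rw [← hqq.isClosed_preimage]
  have key : Prod.map q q ⁻¹' (diagonal (Projectivization ℂ (Fin 3 → ℂ))) =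
      ⋂ i, ⋂ j, {p : {v : Fin 3 → ℂ // v ≠ 0} × {v : Fin 3 → ℂ // v ≠ 0} |
        p.1.1 i * p.2.1 j = p.1.1 j * p.2.1 i} := by
    ext ⟨v, w⟩
    simp only [mem_preimage, Prod.map_apply, mem_diagonal_iff, mem_iInter, mem_setOf_eq]
    rw [q_eq_iff]
    constructor
    · rintro ⟨c, hc⟩ i j
      rw [← hc]
      simp only [Units.smul_def, Pi.smul_apply, smul_eq_mul]
      ring
    · intro h
      obtain ⟨j, hj⟩ := Function.ne_iff.mp w.2
      rw [Pi.zero_apply] at hj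
      have hvj : v.1 j ≠ 0 := by
        intro h0
        obtain ⟨i, hi⟩ := Function.ne_iff.mp v.2
        rw [Pi.zero_apply] at hi
        apply hi
        have hij := h i j
        rw [h0, zero_mul] at hij
        exact (mul_eq_zero.mp hij).resolve_right hj
      refine ⟨Units.mk0 (v.1 j / w.1 j) (div_ne_zero hvj hj), funext fun i => ?_⟩
      simp only [Units.smul_def, Pi.smul_apply, smul_eq_mul, Units.val_mk0]
      field_simp
      linear_combination -(h i j)
  rw [key]
  exact isClosed_iInter fun i => isClosed_iInter fun j => isClosed_eq
      (((continuous_apply i).comp (continuous_subtype_val.comp continuous_fst)).mul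
        ((continuous_apply j).comp (continuous_subtype_val.comp continuous_snd)))
      (((continuous_apply j).comp (continuous_subtype_val.comp continuous_fst)).mul
        ((continuous_apply i).comp (continuous_subtype_val.comp continuous_snd)))


/-! ### Inversion on the Riemann sphere -/

/-- Inversion on the Riemann sphere. -/
noncomputable def ip : OnePoint ℂ → OnePoint ℂ := fun x =>
  x.elim (((0 : ℂ) : OnePoint ℂ)) fun z => if z = 0 then ∞ else ((z⁻¹ : ℂ) : OnePoint ℂ)

@[simp] lemma ip_infty : ip ∞ = ((0 : ℂ) : OnePoint ℂ) := rfl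

@[simp] lemma ip_coe (z : ℂ) :
    ip z = if z = 0 then ∞ else ((z⁻¹ : ℂ) : OnePoint ℂ) := rfl

lemma ip_zero : ip ((0 : ℂ) : OnePoint ℂ) = ∞ := by simp

lemma ip_coe_ne (z : ℂ) (hz : z ≠ 0) : ip z = ((z⁻¹ : ℂ) : OnePoint ℂ) := by simp [hz]

lemma ip_invol : Function.Involutive ip := by
  intro x
  induction x using OnePoint.rec with
  | infty => simp
  | coe z =>
    rcases eq_or_ne z 0 with rfl | hz
    · simp
    · simp [hz, inv_ne_zero hz]

lemma continuous_ip : Continuous ip := by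
  rw [continuous_iff_continuousAt]
  intro x
  induction x using OnePoint.rec with
  | infty =>
    rw [continuousAt_infty']
    have h1 : Tendsto (fun z : ℂ => ((z⁻¹ : ℂ) : OnePoint ℂ)) (coclosedCompact ℂ)
        (𝓝 (((0 : ℂ) : OnePoint ℂ))) := by
      rw [coclosedCompact_eq_cocompact, ← Metric.cobounded_eq_cocompact]
      exact (continuous_coe.tendsto _).comp tendsto_inv₀_cobounded
    refine h1.congr' ?_
    have hne : ∀ᶠ z : ℂ in coclosedCompact ℂ, z ≠ 0 := by
      rw [coclosedCompact_eq_cocompact]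
      exact mem_cocompact.mpr ⟨{0}, isCompact_singleton, fun z hz => hz⟩
    filter_upwards [hne] with z hz
    simp [Function.comp, hz]
  | coe x =>
    rw [continuousAt_coe]
    rcases eq_or_ne x 0 with rfl | hx
    · rw [ContinuousAt]
      have hval : (ip ∘ (OnePoint.some : ℂ → OnePoint ℂ)) 0 = ∞ := by simp [Function.comp]
      rw [hval, ← nhdsNE_sup_pure, tendsto_sup]
      constructor
      · have h2 : Tendsto (fun z : ℂ => ((z⁻¹ : ℂ) : OnePoint ℂ)) (𝓝[≠] (0 : ℂ))
            (𝓝 (∞ : OnePoint ℂ)) := by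
          refine tendsto_coe_infty.comp ?_
          rw [coclosedCompact_eq_cocompact, ← Metric.cobounded_eq_cocompact]
          exact tendsto_inv₀_nhdsNE_zero
        refine h2.congr' ?_
        filter_upwards [self_mem_nhdsWithin] with z hz
        simp [Function.comp, mem_compl_singleton_iff.mp hz]
      · have := tendsto_pure_nhds (ip ∘ (OnePoint.some : ℂ → OnePoint ℂ)) 0
        rwa [hval] at this
    · have hc : ContinuousAt (fun z : ℂ => ((z⁻¹ : ℂ) : OnePoint ℂ)) x :=
        continuous_coe.continuousAt.comp (continuousAt_inv₀ hx)
      refine hc.congr ?_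
      filter_upwards [isOpen_ne.mem_nhds hx] with z hz
      simp [Function.comp, hz]

/-- Inversion as a self-homeomorphism of the Riemann sphere. -/
noncomputable def ipHomeo : OnePoint ℂ ≃ₜ OnePoint ℂ where
  toEquiv := ip_invol.toPerm ip
  continuous_toFun := continuous_ip
  continuous_invFun := continuous_ip

lemma isOpenEmbedding_ipc : IsOpenEmbedding (fun z : ℂ => ip z) := by
  have : (fun z : ℂ => ip z) = ipHomeo ∘ ((↑) : ℂ → OnePoint ℂ) := rfl
  rw [this]
  exact ipHomeo.isOpenEmbedding.comp isOpenEmbedding_coe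


/-! ### The map to the projective plane -/

lemma ne_ab1 (x y : ℂ) : ![x * y, x + y, 1] ≠ 0 := by
  intro h; simpa using congrFun h 2

lemma ne_a10 (y : ℂ) : ![y, 1, 0] ≠ 0 := by
  intro h; simpa using congrFun h 1

lemma ne_100 : ![(1 : ℂ), 0, 0] ≠ 0 := by
  intro h; simpa using congrFun h 0

lemma ne_chart (u y : ℂ) : ![y, 1 + u * y, u] ≠ 0 := by
  intro h
  have h1 := congrFun h 1
  have h2 := congrFun h 2
  simp only [Matrix.cons_val_one, Matrix.head_cons, Pi.zero_apply] at h1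
  simp only [Matrix.cons_val_two, Matrix.tail_cons, Matrix.head_cons, Pi.zero_apply] at h2
  rw [h2, zero_mul, add_zero] at h1
  exact one_ne_zero h1

lemma ne_sym2 (u v : ℂ) : ![(1 : ℂ), u + v, u * v] ≠ 0 := by
  intro h; simpa using congrFun h 0

/-- The map sending an (ordered) pair of points of the Riemann sphere to the projective class
of the coefficients of the corresponding monic (or degenerate) quadratic. -/
noncomputable def g : OnePoint ℂ → OnePoint ℂ → Projectivization ℂ (Fin 3 → ℂ) := fun a b =>
  a.elim
    (b.elim (Projectivization.mk ℂ ![1, 0, 0] ne_100)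
      fun y => Projectivization.mk ℂ ![y, 1, 0] (ne_a10 y))
    fun x => b.elim (Projectivization.mk ℂ ![x, 1, 0] (ne_a10 x))
      fun y => Projectivization.mk ℂ ![x * y, x + y, 1] (ne_ab1 x y)

@[simp] lemma g_coe_coe (x y : ℂ) :
    g x y = Projectivization.mk ℂ ![x * y, x + y, 1] (ne_ab1 x y) := rfl

@[simp] lemma g_inf_coe (y : ℂ) :
    g ∞ y = Projectivization.mk ℂ ![y, 1, 0] (ne_a10 y) := rfl

@[simp] lemma g_coe_inf (x : ℂ) :
    g x ∞ = Projectivization.mk ℂ ![x, 1, 0] (ne_a10 x) := rfl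

@[simp] lemma g_inf_inf : g ∞ ∞ = Projectivization.mk ℂ ![1, 0, 0] ne_100 := rfl

lemma g_symm (a b : OnePoint ℂ) : g a b = g b a := by
  induction a using OnePoint.rec with
  | infty =>
    induction b using OnePoint.rec with
    | infty => rfl
    | coe y => rfl
  | coe x =>
    induction b using OnePoint.rec with
    | infty => rfl
    | coe y =>
      rw [g_coe_coe, g_coe_coe, Projectivization.mk_eq_mk_iff']
      exact ⟨1, by funext i; fin_cases i <;> simp <;> ring⟩

lemma g_chart1 (u y : ℂ) :
    g (ip u) y = Projectivization.mk ℂ ![y, 1 + u * y, u] (ne_chart u y) := by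
  rcases eq_or_ne u 0 with rfl | hu
  · rw [ip_zero, g_inf_coe, Projectivization.mk_eq_mk_iff']
    exact ⟨1, by funext i; fin_cases i <;> simp⟩
  · rw [ip_coe_ne u hu, g_coe_coe, Projectivization.mk_eq_mk_iff']
    refine ⟨u⁻¹, ?_⟩
    funext i
    fin_cases i <;> simp [Pi.smul_apply, smul_eq_mul] <;> field_simp <;> ring

lemma g_chart2 (x v : ℂ) :
    g x (ip v) = Projectivization.mk ℂ ![x, 1 + v * x, v] (ne_chart v x) := by
  rw [g_symm]; exact g_chart1 v x

lemma g_chart3 (u v : ℂ) :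
    g (ip u) (ip v) = Projectivization.mk ℂ ![1, u + v, u * v] (ne_sym2 u v) := by
  rcases eq_or_ne u 0 with rfl | hu
  · rw [ip_zero]
    rcases eq_or_ne v 0 with rfl | hv
    · rw [ip_zero, g_inf_inf, Projectivization.mk_eq_mk_iff']
      exact ⟨1, by funext i; fin_cases i <;> simp⟩
    · rw [ip_coe_ne v hv, g_inf_coe, Projectivization.mk_eq_mk_iff']
      refine ⟨v⁻¹, ?_⟩
      funext i
      fin_cases i <;> simp [Pi.smul_apply, smul_eq_mul] <;> field_simp
  · rw [ip_coe_ne u hu, g_chart2, Projectivization.mk_eq_mk_iff']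
    refine ⟨u⁻¹, ?_⟩
    funext i
    fin_cases i <;> simp [Pi.smul_apply, smul_eq_mul] <;> field_simp <;> ring


/-! ### Continuity -/

lemma continuous_mk_vec {f₀ f₁ f₂ : ℂ × ℂ → ℂ} (h₀ : Continuous f₀) (h₁ : Continuous f₁)
    (h₂ : Continuous f₂) (hne : ∀ p, ![f₀ p, f₁ p, f₂ p] ≠ 0) :
    Continuous fun p : ℂ × ℂ => Projectivization.mk ℂ ![f₀ p, f₁ p, f₂ p] (hne p) := by
  have : Continuous fun p : ℂ × ℂ => (![f₀ p, f₁ p, f₂ p] : Fin 3 → ℂ) := by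
    refine continuous_pi fun i => ?_
    fin_cases i <;> simpa
  exact continuous_q.comp (this.subtype_mk hne)

lemma continuous_g : Continuous fun p : OnePoint ℂ × OnePoint ℂ => g p.1 p.2 := by
  rw [continuous_iff_continuousAt]
  rintro ⟨a, b⟩
  have hcoe : IsOpenEmbedding ((↑) : ℂ → OnePoint ℂ) := isOpenEmbedding_coe
  have hip := isOpenEmbedding_ipc
  induction a using OnePoint.rec with
  | infty =>
    induction b using OnePoint.rec with
    | infty =>
      have hc : Continuous ((fun p : OnePoint ℂ × OnePoint ℂ => g p.1 p.2) ∘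
          (Prod.map (fun z : ℂ => ip z) (fun z : ℂ => ip z))) := by
        have : ((fun p : OnePoint ℂ × OnePoint ℂ => g p.1 p.2) ∘
            (Prod.map (fun z : ℂ => ip z) (fun z : ℂ => ip z))) =
            fun p : ℂ × ℂ => Projectivization.mk ℂ ![1, p.1 + p.2, p.1 * p.2]
              (ne_sym2 p.1 p.2) := funext fun p => g_chart3 p.1 p.2
        rw [this]
        exact continuous_mk_vec continuous_const (continuous_fst.add continuous_snd)
          (continuous_fst.mul continuous_snd) _
      have := ((hip.prodMap hip).continuousAt_iff).mp (hc.continuousAt (x := ((0 : ℂ), (0 : ℂ))))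
      simpa only [Prod.map_apply, ip_zero] using this
    | coe y =>
      have hc : Continuous ((fun p : OnePoint ℂ × OnePoint ℂ => g p.1 p.2) ∘
          (Prod.map (fun z : ℂ => ip z) ((↑) : ℂ → OnePoint ℂ))) := by
        have : ((fun p : OnePoint ℂ × OnePoint ℂ => g p.1 p.2) ∘
            (Prod.map (fun z : ℂ => ip z) ((↑) : ℂ → OnePoint ℂ))) =
            fun p : ℂ × ℂ => Projectivization.mk ℂ ![p.2, 1 + p.1 * p.2, p.1]
              (ne_chart p.1 p.2) := funext fun p => g_chart1 p.1 p.2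
        rw [this]
        exact continuous_mk_vec continuous_snd
          (continuous_const.add (continuous_fst.mul continuous_snd)) continuous_fst _
      have := ((hip.prodMap hcoe).continuousAt_iff).mp (hc.continuousAt (x := ((0 : ℂ), y)))
      simpa only [Prod.map_apply, ip_zero] using this
  | coe x =>
    induction b using OnePoint.rec with
    | infty =>
      have hc : Continuous ((fun p : OnePoint ℂ × OnePoint ℂ => g p.1 p.2) ∘
          (Prod.map ((↑) : ℂ → OnePoint ℂ) (fun z : ℂ => ip z))) := by
        have : ((fun p : OnePoint ℂ × OnePoint ℂ => g p.1 p.2) ∘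
            (Prod.map ((↑) : ℂ → OnePoint ℂ) (fun z : ℂ => ip z))) =
            fun p : ℂ × ℂ => Projectivization.mk ℂ ![p.1, 1 + p.2 * p.1, p.2]
              (ne_chart p.2 p.1) := funext fun p => g_chart2 p.1 p.2
        rw [this]
        exact continuous_mk_vec continuous_fst
          (continuous_const.add (continuous_snd.mul continuous_fst)) continuous_snd _
      have := ((hcoe.prodMap hip).continuousAt_iff).mp (hc.continuousAt (x := (x, (0 : ℂ))))
      simpa only [Prod.map_apply, ip_zero] using this
    | coe y =>
      have hc : Continuous ((fun p : OnePoint ℂ × OnePoint ℂ => g p.1 p.2) ∘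
          (Prod.map ((↑) : ℂ → OnePoint ℂ) ((↑) : ℂ → OnePoint ℂ))) := by
        have : ((fun p : OnePoint ℂ × OnePoint ℂ => g p.1 p.2) ∘
            (Prod.map ((↑) : ℂ → OnePoint ℂ) ((↑) : ℂ → OnePoint ℂ))) =
            fun p : ℂ × ℂ => Projectivization.mk ℂ ![p.1 * p.2, p.1 + p.2, 1]
              (ne_ab1 p.1 p.2) := funext fun p => g_coe_coe p.1 p.2
        rw [this]
        exact continuous_mk_vec (continuous_fst.mul continuous_snd)
          (continuous_fst.add continuous_snd) continuous_const _
      exact ((hcoe.prodMap hcoe).continuousAt_iff).mp (hc.continuousAt (x := (x, y)))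


/-! ### Injectivity and surjectivity -/

lemma quadratic_pair {a b c d : ℂ} (h1 : a * b = c * d) (h2 : a + b = c + d) :
    (a = c ∧ b = d) ∨ (a = d ∧ b = c) := by
  have key : (a - c) * (a - d) = 0 := by linear_combination -h1 + a * h2
  rcases mul_eq_zero.mp key with h | h
  · have hac : a = c := sub_eq_zero.mp h
    refine Or.inl ⟨hac, ?_⟩
    rw [hac] at h2
    exact add_left_cancel h2
  · have had : a = d := sub_eq_zero.mp h
    refine Or.inr ⟨had, ?_⟩
    rw [had, add_comm c d] at h2
    exact add_left_cancel h2

lemma g_inj (a b c d : OnePoint ℂ) (h : g a b = g c d) : s(a, b) = s(c, d) := by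
  induction a using OnePoint.rec with
  | infty =>
    induction b using OnePoint.rec with
    | infty =>
      induction c using OnePoint.rec with
      | infty =>
        induction d using OnePoint.rec with
        | infty => rfl
        | coe d =>
          rw [g_inf_inf, g_inf_coe, Projectivization.mk_eq_mk_iff'] at h
          obtain ⟨t, ht⟩ := h
          have h1 := congrFun ht 1
          have h0 := congrFun ht 0
          simp at h1
          simp [h1] at h0
      | coe c =>
        induction d using OnePoint.rec with
        | infty =>
          rw [g_inf_inf, g_coe_inf, Projectivization.mk_eq_mk_iff'] at h
          obtain ⟨t, ht⟩ := h
          have h1 := congrFun ht 1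
          have h0 := congrFun ht 0
          simp at h1
          simp [h1] at h0
        | coe d =>
          rw [g_inf_inf, g_coe_coe, Projectivization.mk_eq_mk_iff'] at h
          obtain ⟨t, ht⟩ := h
          have h2 := congrFun ht 2
          have h0 := congrFun ht 0
          simp at h2
          simp [h2] at h0
    | coe b =>
      induction c using OnePoint.rec with
      | infty =>
        induction d using OnePoint.rec with
        | infty =>
          rw [g_inf_coe, g_inf_inf, Projectivization.mk_eq_mk_iff'] at h
          obtain ⟨t, ht⟩ := h
          have h1 := congrFun ht 1
          simp at h1
        | coe d =>
          rw [g_inf_coe, g_inf_coe, Projectivization.mk_eq_mk_iff'] at h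
          obtain ⟨t, ht⟩ := h
          have h0 := congrFun ht 0
          have h1 := congrFun ht 1
          simp at h0 h1
          rw [h1, one_mul] at h0
          rw [h0]
      | coe c =>
        induction d using OnePoint.rec with
        | infty =>
          rw [g_inf_coe, g_coe_inf, Projectivization.mk_eq_mk_iff'] at h
          obtain ⟨t, ht⟩ := h
          have h0 := congrFun ht 0
          have h1 := congrFun ht 1
          simp at h0 h1
          rw [h1, one_mul] at h0
          rw [h0]
          exact Sym2.eq_swap
        | coe d =>
          rw [g_inf_coe, g_coe_coe, Projectivization.mk_eq_mk_iff'] at h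
          obtain ⟨t, ht⟩ := h
          have h2 := congrFun ht 2
          have h1 := congrFun ht 1
          simp at h2
          simp [h2] at h1
  | coe a =>
    induction b using OnePoint.rec with
    | infty =>
      induction c using OnePoint.rec with
      | infty =>
        induction d using OnePoint.rec with
        | infty =>
          rw [g_coe_inf, g_inf_inf, Projectivization.mk_eq_mk_iff'] at h
          obtain ⟨t, ht⟩ := h
          have h1 := congrFun ht 1
          simp at h1
        | coe d =>
          rw [g_coe_inf, g_inf_coe, Projectivization.mk_eq_mk_iff'] at h
          obtain ⟨t, ht⟩ := h
          have h0 := congrFun ht 0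
          have h1 := congrFun ht 1
          simp at h0 h1
          rw [h1, one_mul] at h0
          rw [h0]
          exact Sym2.eq_swap
      | coe c =>
        induction d using OnePoint.rec with
        | infty =>
          rw [g_coe_inf, g_coe_inf, Projectivization.mk_eq_mk_iff'] at h
          obtain ⟨t, ht⟩ := h
          have h0 := congrFun ht 0
          have h1 := congrFun ht 1
          simp at h0 h1
          rw [h1, one_mul] at h0
          rw [h0]
        | coe d =>
          rw [g_coe_inf, g_coe_coe, Projectivization.mk_eq_mk_iff'] at h
          obtain ⟨t, ht⟩ := h
          have h2 := congrFun ht 2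
          have h1 := congrFun ht 1
          simp at h2
          simp [h2] at h1
    | coe b =>
      induction c using OnePoint.rec with
      | infty =>
        induction d using OnePoint.rec with
        | infty =>
          rw [g_coe_coe, g_inf_inf, Projectivization.mk_eq_mk_iff'] at h
          obtain ⟨t, ht⟩ := h
          have h2 := congrFun ht 2
          simp at h2
        | coe d =>
          rw [g_coe_coe, g_inf_coe, Projectivization.mk_eq_mk_iff'] at h
          obtain ⟨t, ht⟩ := h
          have h2 := congrFun ht 2
          simp at h2
      | coe c =>
        induction d using OnePoint.rec with
        | infty =>
          rw [g_coe_coe, g_coe_inf, Projectivization.mk_eq_mk_iff'] at h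
          obtain ⟨t, ht⟩ := h
          have h2 := congrFun ht 2
          simp at h2
        | coe d =>
          rw [g_coe_coe, g_coe_coe, Projectivization.mk_eq_mk_iff'] at h
          obtain ⟨t, ht⟩ := h
          have h0 := congrFun ht 0
          have h1 := congrFun ht 1
          have h2 := congrFun ht 2
          simp at h0 h1 h2
          rw [h2, one_mul] at h0 h1
          rcases quadratic_pair h0.symm h1.symm with ⟨hc, hd⟩ | ⟨hc, hd⟩
          · rw [hc, hd]
          · rw [hc, hd]
            exact Sym2.eq_swap

lemma g_surj (p : Projectivization ℂ (Fin 3 → ℂ)) : ∃ a b, g a b = p := by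
  induction p using Projectivization.ind with
  | h v hv =>
    rcases eq_or_ne (v 2) 0 with h2 | h2
    · rcases eq_or_ne (v 1) 0 with h1 | h1
      · have h0 : v 0 ≠ 0 := by
          intro h0
          apply hv
          funext i
          fin_cases i <;> assumption
        refine ⟨∞, ∞, ?_⟩
        rw [g_inf_inf, Projectivization.mk_eq_mk_iff']
        refine ⟨(v 0)⁻¹, ?_⟩
        funext i
        fin_cases i <;> simp [Pi.smul_apply, smul_eq_mul, h1, h2] <;> field_simp
      · refine ⟨∞, ((v 0 / v 1 : ℂ) : OnePoint ℂ), ?_⟩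
        rw [g_inf_coe, Projectivization.mk_eq_mk_iff']
        refine ⟨(v 1)⁻¹, ?_⟩
        funext i
        fin_cases i <;> simp [Pi.smul_apply, smul_eq_mul, h2] <;> field_simp
    · obtain ⟨s, hs⟩ := IsAlgClosed.exists_pow_nat_eq
        ((v 1 / v 2) ^ 2 - 4 * (v 0 / v 2)) (n := 2) (by norm_num)
      refine ⟨(((v 1 / v 2 + s) / 2 : ℂ) : OnePoint ℂ), (((v 1 / v 2 - s) / 2 : ℂ) : OnePoint ℂ), ?_⟩
      rw [g_coe_coe, Projectivization.mk_eq_mk_iff']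
      refine ⟨(v 2)⁻¹, ?_⟩
      funext i
      fin_cases i <;> simp [Pi.smul_apply, smul_eq_mul]
      · have hrw : (v 1 / v 2 + s) / 2 * ((v 1 / v 2 - s) / 2) =
            ((v 1 / v 2) ^ 2 - s ^ 2) / 4 := by ring
        rw [hrw, hs]
        have hrw2 : ((v 1 / v 2) ^ 2 - ((v 1 / v 2) ^ 2 - 4 * (v 0 / v 2))) / 4 = v 0 / v 2 := by
          ring
        rw [hrw2, div_eq_inv_mul]
      · field_simp
        ring
      · field_simp

/-- The induced map on the symmetric square. -/
noncomputable def G : Sym2 (OnePoint ℂ) → Projectivization ℂ (Fin 3 → ℂ) :=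
  Sym2.lift ⟨g, g_symm⟩

@[simp] lemma G_mk (a b : OnePoint ℂ) : G s(a, b) = g a b := Sym2.lift_mk _ a b

lemma continuous_G : Continuous G := by
  rw [isQuotientMap_quot_mk.continuous_iff]
  have : (G ∘ Quot.mk (Sym2.Rel (OnePoint ℂ))) = fun p : OnePoint ℂ × OnePoint ℂ => g p.1 p.2 :=
    funext fun p => G_mk p.1 p.2
  rw [this]
  exact continuous_g

lemma bijective_G : Function.Bijective G := by
  constructor
  · intro u t
    induction u using Sym2.ind with | _ a b =>
    induction t using Sym2.ind with | _ c d =>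
    simp only [G_mk]
    exact g_inj a b c d
  · intro p
    obtain ⟨a, b, hab⟩ := g_surj p
    exact ⟨s(a, b), by simpa using hab⟩

end Stmt7Aux

/-- The space of unordered pairs of points of the Riemann sphere `OnePoint ℂ`, with the
quotient topology, is homeomorphic to the complex projective plane `ℂP²`. -/
theorem stmt_7 : Nonempty (Sym2 (OnePoint ℂ) ≃ₜ Projectivization ℂ (Fin 3 → ℂ)) :=
  ⟨Continuous.homeoOfEquivCompactToT2
    (f := Equiv.ofBijective Stmt7Aux.G Stmt7Aux.bijective_G) Stmt7Aux.continuous_G⟩
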